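/- Let G be a graph, let (T, β) be a tree decomposition of G, and let S_ℓ be an independent set in G such that for each s ∈ S_ℓ a node x_s of T with s ∈ β(x_s) is chosen. Construct T' from T by adding, for every s ∈ S_ℓ, a new leaf node y_s adjacent to x_s, and define β'(x) = (β(x) \ S_ℓ) ∪ N(β(x) ∩ S_ℓ) for every node x of T, and β'(y_s) = N[s] for every s ∈ S_ℓ. Then (T', β') is a tree decomposition of G. -/
import Mathlib


/-- A set of vertices is independent: pairwise nonadjacent. -/
def IsIndep {V : Type*} (G : SimpleGraph V) (s : Set V) : Prop :=
  s.Pairwise fun u v => ¬ G.Adj u v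

/-- Independence number of the subgraph of `G` induced by `X`. -/
noncomputable def indepNumOn {V : Type*} (G : SimpleGraph V) (X : Set V) : ℕ :=
  sSup {k | ∃ s : Finset V, ↑s ⊆ X ∧ IsIndep G ↑s ∧ s.card = k}

/-- `M` is a matching in `G`: adjacent endpoints, pairwise vertex-disjoint edges. -/
def IsMatching' {V : Type*} (G : SimpleGraph V) (M : Finset (V × V)) : Prop :=
  (∀ e ∈ M, G.Adj e.1 e.2) ∧
  ∀ e ∈ M, ∀ f ∈ M, e ≠ f →
    e.1 ≠ f.1 ∧ e.1 ≠ f.2 ∧ e.2 ≠ f.1 ∧ e.2 ≠ f.2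

/-- `M` is an induced matching in `G`. -/
def IsInducedMatching {V : Type*} (G : SimpleGraph V) (M : Finset (V × V)) : Prop :=
  IsMatching' G M ∧
  ∀ e ∈ M, ∀ f ∈ M, e ≠ f →
    ¬ G.Adj e.1 f.1 ∧ ¬ G.Adj e.1 f.2 ∧ ¬ G.Adj e.2 f.1 ∧ ¬ G.Adj e.2 f.2

/-- `μ(G, X)`: maximum size of an induced matching in `G` every edge of which
has an endpoint in `X`. -/
noncomputable def indMatchNumOn {V : Type*} (G : SimpleGraph V) (X : Set V) : ℕ :=
  sSup {k | ∃ M : Finset (V × V), IsInducedMatching G M ∧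
    (∀ e ∈ M, e.1 ∈ X ∨ e.2 ∈ X) ∧ M.card = k}

/-- `(T, bag)` is a tree decomposition of `G`. -/
structure IsTreeDecomp {V : Type*} (G : SimpleGraph V) {ι : Type}
    (T : SimpleGraph ι) (bag : ι → Set V) : Prop where
  isTree : T.IsTree
  edge_mem : ∀ ⦃u v : V⦄, G.Adj u v → ∃ x, u ∈ bag x ∧ v ∈ bag x
  support_connected : ∀ v : V, (T.induce {x | v ∈ bag x}).Connected

/-- A (bundled) tree decomposition of `G`. -/
structure TreeDecomp {V : Type*} (G : SimpleGraph V) where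
  ι : Type
  tree : SimpleGraph ι
  bag : ι → Set V
  is_td : IsTreeDecomp G tree bag

/-- Independence number of a tree decomposition. -/
noncomputable def TreeDecomp.alpha {V : Type*} {G : SimpleGraph V} (D : TreeDecomp G) : ℕ :=
  sSup {k | ∃ x : D.ι, k = indepNumOn G (D.bag x)}

/-- Induced matching number of a tree decomposition. -/
noncomputable def TreeDecomp.mu {V : Type*} {G : SimpleGraph V} (D : TreeDecomp G) : ℕ :=
  sSup {k | ∃ x : D.ι, k = indMatchNumOn G (D.bag x)}

/-- Tree-independence number of `G`. -/
noncomputable def treeIndepNum {V : Type*} (G : SimpleGraph V) : ℕ :=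
  sInf {k | ∃ D : TreeDecomp G, D.alpha = k}

/-- Induced matching treewidth of `G`. -/
noncomputable def imTreewidth {V : Type*} (G : SimpleGraph V) : ℕ :=
  sInf {k | ∃ D : TreeDecomp G, D.mu = k}

/-- `G` has no induced subgraph isomorphic to `K_{t,t}`. -/
def KttFree {V : Type*} (G : SimpleGraph V) (t : ℕ) : Prop :=
  IsEmpty (completeBipartiteGraph (Fin t) (Fin t) ↪g G)

/-- `G` contains `K_{t,t}` as a (not necessarily induced) subgraph. -/
def HasKttSubgraph {V : Type*} (G : SimpleGraph V) (t : ℕ) : Prop :=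
  ∃ A B : Finset V, Disjoint A B ∧ A.card = t ∧ B.card = t ∧
    ∀ a ∈ A, ∀ b ∈ B, G.Adj a b

/-- `G` is bipartite: its vertex set is the union of two independent sets. -/
def IsBipartite {V : Type*} (G : SimpleGraph V) : Prop :=
  ∃ A B : Set V, A ∪ B = Set.univ ∧ IsIndep G A ∧ IsIndep G B

/-- `N(X)`: vertices outside `X` adjacent to at least one vertex of `X`. -/
def nbhd {V : Type*} (G : SimpleGraph V) (X : Set V) : Set V :=
  {v | v ∉ X ∧ ∃ u ∈ X, G.Adj u v}

section AuxStmt11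

open SimpleGraph

variable {ι S : Type} {T : SimpleGraph ι} {T' : SimpleGraph (ι ⊕ S)} {σ : S → ι}

/-- Pull back a walk in the extended graph whose support consists of `inl` vertices. -/
lemma aux_pullWalk (h1 : ∀ a b, T'.Adj (Sum.inl a) (Sum.inl b) → T.Adj a b) :
    ∀ {u v : ι ⊕ S} (c : T'.Walk u v),
      (∀ x ∈ c.support, ∃ a, x = Sum.inl a) →
      ∃ (a b : ι), u = Sum.inl a ∧ v = Sum.inl b ∧
        ∃ w : T.Walk a b, w.support.map Sum.inl = c.support ∧
          w.edges.map (Sym2.map Sum.inl) = c.edges := by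
  intro u v c
  induction c with
  | nil =>
    intro h
    obtain ⟨a, rfl⟩ := h _ (SimpleGraph.Walk.start_mem_support _)
    exact ⟨a, a, rfl, rfl, SimpleGraph.Walk.nil, by simp, by simp⟩
  | @cons u w v huw p ih =>
    intro h
    obtain ⟨a, rfl⟩ := h _ (SimpleGraph.Walk.start_mem_support _)
    obtain ⟨a', b, rfl, rfl, q, hsup, hedg⟩ := ih (fun x hx => h x (by simp [hx]))
    refine ⟨a, b, rfl, rfl, SimpleGraph.Walk.cons (h1 _ _ huw) q, ?_, ?_⟩
    · simp [hsup]
    · simp [hedg]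

/-- Any neighbour of an `inr` vertex is the corresponding attachment node. -/
lemma aux_adj_inr (h2 : ∀ a s, T'.Adj (Sum.inl a) (Sum.inr s) ↔ a = σ s)
    (h3 : ∀ s t : S, ¬ T'.Adj (Sum.inr s) (Sum.inr t))
    {s : S} {x : ι ⊕ S} (h : T'.Adj (Sum.inr s) x) : x = Sum.inl (σ s) := by
  cases x with
  | inl a => rw [(h2 a s).mp h.symm]
  | inr t => exact absurd h (h3 s t)

/-- There is no cycle through an `inr` vertex. -/
lemma aux_no_cycle_inr (h2 : ∀ a s, T'.Adj (Sum.inl a) (Sum.inr s) ↔ a = σ s)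
    (h3 : ∀ s t : S, ¬ T'.Adj (Sum.inr s) (Sum.inr t))
    {s : S} (c : T'.Walk (Sum.inr s) (Sum.inr s)) : ¬ c.IsCycle := by
  intro hc
  cases c with
  | nil => exact hc.ne_nil rfl
  | @cons _ w _ huw p =>
    have hw : w = Sum.inl (σ s) := aux_adj_inr h2 h3 huw
    subst hw
    -- the last edge of `p` is also `s(inr s, inl (σ s))`
    have hne : (Sum.inr s : ι ⊕ S) ≠ Sum.inl (σ s) := by simp
    obtain ⟨z, hz, q, hq⟩ := SimpleGraph.Walk.exists_eq_cons_of_ne hne p.reverse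
    have hzz : z = Sum.inl (σ s) := aux_adj_inr h2 h3 hz
    subst hzz
    have hmem : s(Sum.inr s, Sum.inl (σ s)) ∈ p.edges := by
      have : s(Sum.inr s, Sum.inl (σ s)) ∈ p.reverse.edges := by
        rw [hq]; simp
      rwa [SimpleGraph.Walk.edges_reverse, List.mem_reverse] at this
    have hnodup := hc.edges_nodup
    rw [SimpleGraph.Walk.edges_cons, List.nodup_cons] at hnodup
    exact hnodup.1 (by simpa [Sym2.eq_swap] using hmem)

/-- The extended graph is acyclic. -/
lemma aux_acyclic (h1 : ∀ a b, T'.Adj (Sum.inl a) (Sum.inl b) → T.Adj a b)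
    (h2 : ∀ a s, T'.Adj (Sum.inl a) (Sum.inr s) ↔ a = σ s)
    (h3 : ∀ s t : S, ¬ T'.Adj (Sum.inr s) (Sum.inr t))
    (hT : T.IsAcyclic) : T'.IsAcyclic := by
  classical
  intro v c hc
  obtain hall | hall := Classical.em (∀ x ∈ c.support, ∃ a : ι, x = Sum.inl a)
  · obtain ⟨a, b, rfl, hb, w, hsup, hedg⟩ := aux_pullWalk h1 c hall
    obtain rfl : a = b := by simpa using hb
    refine hT w ?_
    refine ⟨⟨⟨?_⟩, ?_⟩, ?_⟩
    · exact List.Nodup.of_map _ (hedg ▸ hc.edges_nodup)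
    · intro hnil
      have h3l := hc.three_le_length
      have : c.edges.length = 0 := by rw [← hedg, hnil]; simp
      rw [SimpleGraph.Walk.length_edges] at this
      omega
    · have := hc.support_nodup
      rw [← hsup, ← List.map_tail] at this
      exact List.Nodup.of_map _ this
  · push_neg at hall
    obtain ⟨x, hx, hnx⟩ := hall
    cases x with
    | inl a => exact hnx a rfl
    | inr s => exact aux_no_cycle_inr h2 h3 _ (hc.rotate hx)

/-- The extended graph is connected. -/
lemma aux_connected (h1 : ∀ a b, T'.Adj (Sum.inl a) (Sum.inl b) ↔ T.Adj a b)
    (h2 : ∀ a s, T'.Adj (Sum.inl a) (Sum.inr s) ↔ a = σ s)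
    (hT : T.Connected) : T'.Connected := by
  let f : T →g T' := ⟨Sum.inl, fun h => (h1 _ _).mpr h⟩
  have hreach : ∀ a b : ι, T'.Reachable (Sum.inl a) (Sum.inl b) :=
    fun a b => (hT.preconnected a b).map f
  have hleaf : ∀ s : S, T'.Reachable (Sum.inl (σ s)) (Sum.inr s) :=
    fun s => ((h2 (σ s) s).mpr rfl).reachable
  have hne : Nonempty ι := hT.nonempty
  refine (SimpleGraph.connected_iff _).mpr ⟨?_, ⟨Sum.inl hne.some⟩⟩
  rintro (a | s) (b | t)
  · exact hreach a b
  · exact (hreach a (σ t)).trans (hleaf t)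
  · exact ((hreach b (σ s)).trans (hleaf s)).symm
  · exact ((hleaf s).symm.trans (hreach (σ s) (σ t))).trans (hleaf t)

/-- Reachability is monotone under enlarging the inducing set. -/
lemma aux_reach_mono {B B' : Set ι} (h : B ⊆ B') {x y : ↥B}
    (hr : (T.induce B).Reachable x y) :
    (T.induce B').Reachable ⟨x.1, h x.2⟩ ⟨y.1, h y.2⟩ := by
  let f : T.induce B →g T.induce B' :=
    ⟨fun z => ⟨z.1, h z.2⟩, fun hadj => by simpa using hadj⟩
  exact hr.map f

/-- A union of connected induced subgraphs, each meeting a common connected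
induced subgraph, induces a connected subgraph. -/
lemma aux_union_connected {B : Set ι} {κ : Type} {C : κ → Set ι}
    (hB : (T.induce B).Connected)
    (hC : ∀ k, (T.induce (C k)).Connected)
    (hmeet : ∀ k, (B ∩ C k).Nonempty) :
    (T.induce (B ∪ ⋃ k, C k)).Connected := by
  have hBsub : B ⊆ B ∪ ⋃ k, C k := Set.subset_union_left
  have hCsub : ∀ k, C k ⊆ B ∪ ⋃ k, C k := fun k =>
    (Set.subset_iUnion C k).trans Set.subset_union_right
  obtain ⟨b0, hb0⟩ := hB.nonempty
  have key : ∀ x : ↥(B ∪ ⋃ k, C k),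
      (T.induce (B ∪ ⋃ k, C k)).Reachable x ⟨b0, hBsub hb0⟩ := by
    rintro ⟨x, hx | hx⟩
    · exact aux_reach_mono hBsub (hB.preconnected ⟨x, hx⟩ ⟨b0, hb0⟩)
    · rw [Set.mem_iUnion] at hx
      obtain ⟨k, hk⟩ := hx
      obtain ⟨m, hmB, hmC⟩ := hmeet k
      have r1 : (T.induce (B ∪ ⋃ k, C k)).Reachable ⟨x, (hCsub k) hk⟩ ⟨m, (hCsub k) hmC⟩ :=
        aux_reach_mono (hCsub k) ((hC k).preconnected ⟨x, hk⟩ ⟨m, hmC⟩)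
      have r2 : (T.induce (B ∪ ⋃ k, C k)).Reachable ⟨m, hBsub hmB⟩ ⟨b0, hBsub hb0⟩ :=
        aux_reach_mono hBsub (hB.preconnected ⟨m, hmB⟩ ⟨b0, hb0⟩)
      exact r1.trans r2
  exact (SimpleGraph.connected_iff _).mpr
    ⟨fun x y => (key x).trans (key y).symm, ⟨⟨b0, hBsub hb0⟩⟩⟩

/-- Connectivity of the induced subgraph on a support set in the extended graph. -/
lemma aux_induce_connected (h1 : ∀ a b, T'.Adj (Sum.inl a) (Sum.inl b) ↔ T.Adj a b)
    (h2 : ∀ a s, T'.Adj (Sum.inl a) (Sum.inr s) ↔ a = σ s)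
    {A : Set (ι ⊕ S)}
    (hA : (T.induce {x | Sum.inl x ∈ A}).Connected)
    (hinr : ∀ s : S, Sum.inr s ∈ A → Sum.inl (σ s) ∈ A) :
    (T'.induce A).Connected := by
  let f : T.induce {x | Sum.inl x ∈ A} →g T'.induce A :=
    ⟨fun x => ⟨Sum.inl x.1, x.2⟩, fun hadj => by
      simp only [SimpleGraph.comap_adj] at hadj ⊢
      exact (h1 _ _).mpr hadj⟩
  have hreach : ∀ (x y : ι) (hx : Sum.inl x ∈ A) (hy : Sum.inl y ∈ A),
      (T'.induce A).Reachable ⟨Sum.inl x, hx⟩ ⟨Sum.inl y, hy⟩ :=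
    fun x y hx hy => (hA.preconnected ⟨x, hx⟩ ⟨y, hy⟩).map f
  have hstep : ∀ (s : S) (hs : Sum.inr s ∈ A),
      (T'.induce A).Reachable ⟨Sum.inl (σ s), hinr s hs⟩ ⟨Sum.inr s, hs⟩ := by
    intro s hs
    refine SimpleGraph.Adj.reachable ?_
    simp only [SimpleGraph.comap_adj]
    exact (h2 (σ s) s).mpr rfl
  obtain ⟨x0⟩ := hA.nonempty
  refine (SimpleGraph.connected_iff _).mpr ⟨?_, ⟨⟨Sum.inl x0.1, x0.2⟩⟩⟩
  rintro ⟨(a | s), ha⟩ ⟨(b | t), hb⟩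
  · exact hreach a b ha hb
  · exact (hreach a (σ t) ha (hinr t hb)).trans (hstep t hb)
  · exact ((hreach b (σ s) hb (hinr s ha)).trans (hstep s ha)).symm
  · exact (((hstep s ha).symm.trans
      (hreach (σ s) (σ t) (hinr s ha) (hinr t hb))).trans (hstep t hb))

/-- A graph induced on a singleton set is connected. -/
lemma aux_singleton_connected {W : Type*} (H : SimpleGraph W) (a : W) :
    (H.induce {a}).Connected := by
  refine (SimpleGraph.connected_iff _).mpr ⟨?_, ⟨⟨a, rfl⟩⟩⟩
  rintro ⟨x, hx⟩ ⟨y, hy⟩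
  simp only [Set.mem_singleton_iff] at hx hy
  subst hx; subst hy
  exact SimpleGraph.Reachable.refl _

end AuxStmt11

/-- Claim 3.6: given a tree decomposition `(T, bag)` of `G`, an independent
set `Sl`, and for each `s ∈ Sl` a chosen node `xs s` whose bag contains `s`, the pair
`(T', β')` obtained by adding a leaf `y_s` at `xs s` for each `s ∈ Sl`, with
`β'(x) = (bag x \ Sl) ∪ N(bag x ∩ Sl)` and `β'(y_s) = N[s]`, is a tree decomposition. -/
theorem stmt11 (V : Type) [Fintype V] (G : SimpleGraph V)
    {ι : Type} (T : SimpleGraph ι) (bag : ι → Set V)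
    (hTD : IsTreeDecomp G T bag)
    (Sl : Set V) (hSl : IsIndep G Sl)
    (xs : Sl → ι) (hxs : ∀ s : Sl, (s : V) ∈ bag (xs s)) :
    IsTreeDecomp G
      (SimpleGraph.fromRel (fun a b : ι ⊕ Sl =>
        match a, b with
        | Sum.inl a, Sum.inl b => T.Adj a b
        | Sum.inl a, Sum.inr s => a = xs s
        | _, _ => False))
      (Sum.elim (fun x : ι => (bag x \ Sl) ∪ nbhd G (bag x ∩ Sl))
        (fun s : Sl => insert (s : V) (G.neighborSet (s : V)))) := by
  classical
  set T' := SimpleGraph.fromRel (fun a b : ι ⊕ Sl =>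
    match a, b with
    | Sum.inl a, Sum.inl b => T.Adj a b
    | Sum.inl a, Sum.inr s => a = xs s
    | _, _ => False) with hT'def
  have h1 : ∀ a b : ι, T'.Adj (Sum.inl a) (Sum.inl b) ↔ T.Adj a b := by
    intro a b
    rw [hT'def]
    simp only [SimpleGraph.fromRel_adj]
    constructor
    · rintro ⟨hne, h | h⟩
      · exact h
      · exact h.symm
    · intro h
      exact ⟨by simpa using h.ne, Or.inl h⟩
  have h2 : ∀ (a : ι) (s : Sl), T'.Adj (Sum.inl a) (Sum.inr s) ↔ a = xs s := by
    intro a s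
    rw [hT'def]
    simp only [SimpleGraph.fromRel_adj]
    constructor
    · rintro ⟨hne, h | h⟩
      · exact h
      · exact h.elim
    · intro h
      exact ⟨by simp, Or.inl h⟩
  have h3 : ∀ s t : Sl, ¬ T'.Adj (Sum.inr s) (Sum.inr t) := by
    intro s t h
    rw [hT'def] at h
    simp only [SimpleGraph.fromRel_adj] at h
    rcases h with ⟨-, h | h⟩ <;> exact h
  refine ⟨⟨aux_connected h1 h2 hTD.isTree.isConnected,
      aux_acyclic (fun a b => (h1 a b).mp) h2 h3 hTD.isTree.IsAcyclic⟩, ?_, ?_⟩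
  · -- edge_mem
    intro u v huv
    by_cases hu : u ∈ Sl
    · exact ⟨Sum.inr ⟨u, hu⟩, Set.mem_insert _ _, Set.mem_insert_of_mem _ huv⟩
    · by_cases hvmem : v ∈ Sl
      · exact ⟨Sum.inr ⟨v, hvmem⟩, Set.mem_insert_of_mem _ huv.symm, Set.mem_insert _ _⟩
      · obtain ⟨x, hux, hvx⟩ := hTD.edge_mem huv
        exact ⟨Sum.inl x, Set.mem_union_left _ ⟨hux, hu⟩, Set.mem_union_left _ ⟨hvx, hvmem⟩⟩
  · -- support_connected
    intro v
    by_cases hv : v ∈ Sl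
    · have hset : {x : ι ⊕ Sl | v ∈ Sum.elim
          (fun x : ι => (bag x \ Sl) ∪ nbhd G (bag x ∩ Sl))
          (fun s : Sl => insert (s : V) (G.neighborSet (s : V))) x}
          = {Sum.inr ⟨v, hv⟩} := by
        ext x
        cases x with
        | inl a =>
          simp only [Set.mem_setOf_eq, Sum.elim_inl, Set.mem_union, Set.mem_diff,
            Set.mem_singleton_iff]
          constructor
          · rintro (⟨-, h2'⟩ | ⟨-, u, ⟨-, hu2⟩, hadj⟩)
            · exact absurd hv h2'
            · exact absurd hadj (hSl hu2 hv hadj.ne)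
          · intro h
            exact absurd h (by simp)
        | inr s =>
          simp only [Set.mem_setOf_eq, Sum.elim_inr, Set.mem_insert_iff,
            SimpleGraph.mem_neighborSet, Set.mem_singleton_iff, Sum.inr.injEq]
          constructor
          · rintro (h | h)
            · exact Subtype.ext h.symm
            · exact absurd h (hSl s.2 hv (fun he => G.irrefl (he ▸ h)))
          · rintro rfl
            exact Or.inl rfl
      rw [hset]
      exact aux_singleton_connected _ _
    · refine aux_induce_connected h1 h2 ?_ ?_
      · have hsetB : {x : ι | Sum.inl x ∈ {x : ι ⊕ Sl | v ∈ Sum.elim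
            (fun x : ι => (bag x \ Sl) ∪ nbhd G (bag x ∩ Sl))
            (fun s : Sl => insert (s : V) (G.neighborSet (s : V))) x}}
            = {x | v ∈ bag x} ∪
              ⋃ k : {s : Sl // G.Adj (s : V) v}, {x | ((k.1 : V)) ∈ bag x} := by
          ext x
          simp only [Set.mem_setOf_eq, Sum.elim_inl, Set.mem_union, Set.mem_diff,
            Set.mem_iUnion]
          constructor
          · rintro (⟨hb, -⟩ | ⟨-, u, ⟨hu1, hu2⟩, hadj⟩)
            · exact Or.inl hb
            · exact Or.inr ⟨⟨⟨u, hu2⟩, hadj⟩, hu1⟩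
          · rintro (hb | ⟨⟨⟨u, hu⟩, hadj⟩, hx⟩)
            · exact Or.inl ⟨hb, hv⟩
            · exact Or.inr ⟨fun hmem => hv hmem.2, u, ⟨hx, hu⟩, hadj⟩
        rw [hsetB]
        refine aux_union_connected (hTD.support_connected v)
          (fun k => hTD.support_connected (k.1 : V)) ?_
        intro k
        obtain ⟨x, hsx, hvx⟩ := hTD.edge_mem k.2
        exact ⟨x, hvx, hsx⟩
      · intro s hs
        simp only [Set.mem_setOf_eq, Sum.elim_inr, Set.mem_insert_iff,
          SimpleGraph.mem_neighborSet] at hs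
        have hadj : G.Adj (s : V) v := by
          rcases hs with h | h
          · exact absurd (h ▸ s.2) hv
          · exact h
        exact Set.mem_union_right _ ⟨fun hmem => hv hmem.2, s.1, ⟨hxs s, s.2⟩, hadj⟩
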